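/- Let U and Y be complex Hilbert spaces, F a closed subspace of U, ω = (ω₁, ω₂) : F → Y ⊕ U a contraction, G = U ⊖ F, and let M : ℓ²(ℕ, 𝒟_{ω*}) ⊕ U → ℓ²(ℕ, G) ⊕ ℓ²(ℕ, Y) be the co-isometry whose action on finitely supported sequences d = (d_i) and u ∈ U is given componentwise by: G-part at index n equal to Π_G (ω₂ Π_F)ⁿ u + Σ_{i=0}^{n-1} Π_G (ω₂ Π_F)^{n-1-i} Π_U D_{ω*} d_i, and Y-part at index n equal to ω₁ Π_F (ω₂ Π_F)ⁿ u + Π_Y D_{ω*} d_n + Σ_{i=0}^{n-1} ω₁ Π_F (ω₂ Π_F)^{n-1-i} Π_U D_{ω*} d_i. If, in addition, ω is an isometry and ω₂ Π_F is pointwise stable, i.e. (ω₂ Π_F)ⁿ u → 0 as n → ∞ for every u ∈ U, then M is unitary. -/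

import Mathlib

set_option maxHeartbeats 1000000000
set_option synthInstance.maxHeartbeats 1000000

open scoped ENNReal Topology
open Filter

/-- if moreover `ω` is an isometry and `ω₂ Π_F` is pointwise stable, then the
Redheffer coefficient matrix `M : ℓ²(ℕ, 𝒟_{ω*}) ⊕ U → ℓ²(ℕ, G) ⊕ ℓ²(ℕ, Y)` is unitary. -/
theorem stmt_8
    {U Y : Type*}
    [NormedAddCommGroup U] [InnerProductSpace ℂ U] [CompleteSpace U]
    [NormedAddCommGroup Y] [InnerProductSpace ℂ Y] [CompleteSpace Y]
    (F : Submodule ℂ U) [CompleteSpace F]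
    (G : Submodule ℂ U) [CompleteSpace G] (hG : G = Fᗮ)
    (ω₁ : F →L[ℂ] Y) (ω₂ : F →L[ℂ] U)
    (ω : F →L[ℂ] WithLp 2 (Y × U))
    (hωdef : ∀ f : F, ω f = (WithLp.equiv 2 (Y × U)).symm (ω₁ f, ω₂ f))
    (hωcontr : ‖ω‖ ≤ 1)
    (Dω : WithLp 2 (Y × U) →L[ℂ] WithLp 2 (Y × U))
    (hDωpos : Dω.IsPositive)
    (hDωsq : Dω.comp Dω = 1 - ω.comp ω.adjoint)
    (𝒟 : Submodule ℂ (WithLp 2 (Y × U))) [CompleteSpace 𝒟]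
    (h𝒟 : 𝒟 = (LinearMap.range (Dω : WithLp 2 (Y × U) →ₗ[ℂ] WithLp 2 (Y × U))).topologicalClosure)
    (M : WithLp 2 ((lp (fun _ : ℕ => 𝒟) 2) × U) →L[ℂ]
        WithLp 2 ((lp (fun _ : ℕ => G) 2) × (lp (fun _ : ℕ => Y) 2)))
    (hM1 : ∀ (d : ℕ → 𝒟) (hfin : Set.Finite (Function.support d)) (hd : Memℓp d 2)
        (u : U) (n : ℕ),
      (WithLp.equiv 2 ((lp (fun _ : ℕ => G) 2) × (lp (fun _ : ℕ => Y) 2))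
          (M ((WithLp.equiv 2 ((lp (fun _ : ℕ => 𝒟) 2) × U)).symm (⟨d, hd⟩, u)))).1 n =
        ((Submodule.orthogonalProjectionOnto G).comp ((ω₂.comp (Submodule.orthogonalProjectionOnto F)) ^ n)) u +
          ∑ i ∈ Finset.range n,
            ((Submodule.orthogonalProjectionOnto G).comp
                ((ω₂.comp (Submodule.orthogonalProjectionOnto F)) ^ (n - 1 - i)))
              (WithLp.equiv 2 (Y × U) (Dω ↑(d i))).2)
    (hM2 : ∀ (d : ℕ → 𝒟) (hfin : Set.Finite (Function.support d)) (hd : Memℓp d 2)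
        (u : U) (n : ℕ),
      (WithLp.equiv 2 ((lp (fun _ : ℕ => G) 2) × (lp (fun _ : ℕ => Y) 2))
          (M ((WithLp.equiv 2 ((lp (fun _ : ℕ => 𝒟) 2) × U)).symm (⟨d, hd⟩, u)))).2 n =
        (ω₁.comp ((Submodule.orthogonalProjectionOnto F).comp
            ((ω₂.comp (Submodule.orthogonalProjectionOnto F)) ^ n))) u +
          (WithLp.equiv 2 (Y × U) (Dω ↑(d n))).1 +
          ∑ i ∈ Finset.range n,
            (ω₁.comp ((Submodule.orthogonalProjectionOnto F).comp
                ((ω₂.comp (Submodule.orthogonalProjectionOnto F)) ^ (n - 1 - i))))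
              (WithLp.equiv 2 (Y × U) (Dω ↑(d i))).2)
    (hMcoiso : M.comp M.adjoint = 1)
    (hωiso : ∀ f : F, ‖ω f‖ = ‖f‖)
    (hstable : ∀ u : U,
      Filter.Tendsto (fun n : ℕ => ((ω₂.comp (Submodule.orthogonalProjectionOnto F)) ^ n) u)
        Filter.atTop (𝓝 0)) :
    M.adjoint.comp M = 1 ∧ M.comp M.adjoint = 1 := by
  classical
  subst hG
  -- ## Part A: operator identities
  have hsa : ContinuousLinearMap.adjoint Dω = Dω := hDωpos.isSelfAdjoint.adjoint_eq
  have hωinner : ∀ f g : F, (inner ℂ (ω f) (ω g) : ℂ) = inner ℂ f g := fun f g =>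
    (LinearIsometry.inner_map_map ⟨ω.toLinearMap, hωiso⟩ f g)
  have hωadj : ∀ f : F, ω.adjoint (ω f) = f := by
    intro f
    refine ext_inner_left ℂ fun v => ?_
    rw [ContinuousLinearMap.adjoint_inner_right, hωinner]
  have hDsq : ∀ v, Dω (Dω v) = v - ω (ω.adjoint v) := by
    intro v
    have := congrArg (fun T => T v) hDωsq
    simpa using this
  have hDω0 : ∀ f : F, Dω (ω f) = 0 := by
    intro f
    have h2 : Dω (Dω (ω f)) = 0 := by rw [hDsq, hωadj]; abel
    have key := ContinuousLinearMap.adjoint_inner_left Dω (Dω (ω f)) (ω f)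
    rw [hsa, h2, inner_zero_right] at key
    exact inner_self_eq_zero.mp key
  have hωadjD0 : ∀ w, ω.adjoint (Dω w) = 0 := by
    intro w
    refine ext_inner_left ℂ fun v => ?_
    rw [ContinuousLinearMap.adjoint_inner_right]
    have key := ContinuousLinearMap.adjoint_inner_right Dω (ω v) w
    rw [hsa] at key
    rw [key, hDω0, inner_zero_left, inner_zero_right]
  have hωadjD : ∀ v ∈ 𝒟, ω.adjoint v = 0 := by
    intro v hv
    rw [h𝒟] at hv
    have hcl : IsClosed {w : WithLp 2 (Y × U) | ω.adjoint w = 0} :=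
      isClosed_eq (ContinuousLinearMap.continuous _) continuous_const
    have hsub : (LinearMap.range (Dω : WithLp 2 (Y × U) →ₗ[ℂ] WithLp 2 (Y × U)) : Set (WithLp 2 (Y × U))) ⊆
        {w | ω.adjoint w = 0} := by
      rintro _ ⟨w, rfl⟩; exact hωadjD0 w
    have hv' : v ∈ closure (LinearMap.range (Dω : WithLp 2 (Y × U) →ₗ[ℂ] WithLp 2 (Y × U)) : Set (WithLp 2 (Y × U))) :=
      (Submodule.topologicalClosure_coe (LinearMap.range (Dω : WithLp 2 (Y × U) →ₗ[ℂ] WithLp 2 (Y × U)))) ▸ hv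
    exact hcl.closure_subset_iff.mpr hsub hv'
  have hWD0 : ∀ w, ω (ω.adjoint (Dω w)) = 0 := by
    intro w; rw [hωadjD0, map_zero]
  have hDP : ∀ v, Dω v = v - ω (ω.adjoint v) := by
    set Q : WithLp 2 (Y × U) → WithLp 2 (Y × U) :=
      fun v => v - ω (ω.adjoint v) - Dω v with hQdef
    have hWW : ∀ v, ω (ω.adjoint (ω (ω.adjoint v))) = ω (ω.adjoint v) := by
      intro v; rw [hωadj]
    have hDW : ∀ v, Dω (ω (ω.adjoint v)) = 0 := fun v => hDω0 _
    have hQQ : ∀ v, Q (Q v) = Q v + Q v := by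
      intro v
      simp only [hQdef, map_sub, hWW, hWD0, hDW, hDsq, sub_zero]
      abel
    have hQ0 : ∀ v, Q v = 0 := by
      intro v
      set w := Q v with hw
      have hQw : Q w = w + w := hQQ v
      simp only [hQdef] at hQw
      have hDw : Dω w = w - ω (ω.adjoint w) - (w + w) := by rw [← hQw]; abel
      have hpos : 0 ≤ RCLike.re (inner ℂ (Dω w) w : ℂ) := by
        have := hDωpos.2 w
        rwa [ContinuousLinearMap.reApplyInnerSelf_apply] at this
      have hWw : RCLike.re (inner ℂ (ω (ω.adjoint w)) w : ℂ) = ‖ω.adjoint w‖ ^ 2 := by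
        have key := ContinuousLinearMap.adjoint_inner_right ω (ω.adjoint w) w
        rw [← key, inner_self_eq_norm_sq_to_K]
        norm_cast
      have hself : RCLike.re (inner ℂ w w : ℂ) = ‖w‖ ^ 2 := by
        rw [inner_self_eq_norm_sq_to_K]; norm_cast
      have hrew : RCLike.re (inner ℂ (Dω w) w : ℂ)
          = ‖w‖ ^ 2 - ‖ω.adjoint w‖ ^ 2 - 2 * ‖w‖ ^ 2 := by
        rw [hDw, inner_sub_left, inner_sub_left, inner_add_left, map_sub, map_sub, map_add,
          hWw, hself]
        ring
      have hw0 : ‖w‖ ^ 2 ≤ 0 := by nlinarith [sq_nonneg ‖ω.adjoint w‖]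
      have : ‖w‖ = 0 := by nlinarith [norm_nonneg w]
      exact norm_eq_zero.mp this
    intro v
    have h := hQ0 v
    simp only [hQdef] at h
    exact (sub_eq_zero.mp h).symm
  have hDid : ∀ v ∈ 𝒟, Dω v = v := by
    intro v hv
    rw [h𝒟] at hv
    have hcl : IsClosed {w : WithLp 2 (Y × U) | Dω w = w} :=
      isClosed_eq (ContinuousLinearMap.continuous _) continuous_id
    have hsub : (LinearMap.range (Dω : WithLp 2 (Y × U) →ₗ[ℂ] WithLp 2 (Y × U)) : Set (WithLp 2 (Y × U))) ⊆ {w | Dω w = w} := by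
      rintro _ ⟨w, rfl⟩
      show Dω (Dω w) = Dω w
      rw [hDP (Dω w), hWD0, sub_zero]
    have hv' : v ∈ closure (LinearMap.range (Dω : WithLp 2 (Y × U) →ₗ[ℂ] WithLp 2 (Y × U)) : Set (WithLp 2 (Y × U))) :=
      (Submodule.topologicalClosure_coe (LinearMap.range (Dω : WithLp 2 (Y × U) →ₗ[ℂ] WithLp 2 (Y × U)))) ▸ hv
    exact hcl.closure_subset_iff.mpr hsub hv'
  -- ## Part B: isometry on finitely supported sequences
  set A : U →L[ℂ] U := ω₂.comp (Submodule.orthogonalProjectionOnto F) with hA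
  have hrpow : ∀ a : ℝ, a ^ ((2:ℝ≥0∞).toReal) = a ^ (2:ℕ) := by
    intro a
    rw [show ((2:ℝ≥0∞).toReal) = ((2:ℕ):ℝ) by norm_num, Real.rpow_natCast]
  have h2pos : 0 < (2:ℝ≥0∞).toReal := by norm_num
  have hpyth : ∀ z : U, ‖z‖^2
      = ‖Submodule.orthogonalProjectionOnto F z‖^2 + ‖Submodule.orthogonalProjectionOnto Fᗮ z‖^2 := by
    intro z
    have hdec : ((Submodule.orthogonalProjectionOnto F z : U)) + ((Submodule.orthogonalProjectionOnto Fᗮ z : U)) = z :=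
      Submodule.starProjection_add_starProjection_orthogonal (K := F) z
    have hortho : (inner ℂ ((Submodule.orthogonalProjectionOnto F z : U))
        ((Submodule.orthogonalProjectionOnto Fᗮ z : U)) : ℂ) = 0 :=
      Submodule.inner_right_of_mem_orthogonal (SetLike.coe_mem _) (SetLike.coe_mem _)
    calc ‖z‖^2 = ‖((Submodule.orthogonalProjectionOnto F z : U)) + ((Submodule.orthogonalProjectionOnto Fᗮ z : U))‖^2 := by
          rw [hdec]
      _ = _ := by
          rw [norm_add_sq (𝕜 := ℂ), hortho]
          simp [Submodule.coe_norm]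
  have hωsplit : ∀ f : F, ‖f‖^2 = ‖ω₁ f‖^2 + ‖ω₂ f‖^2 := by
    intro f
    have h1 : ‖ω f‖^2 = ‖f‖^2 := by rw [hωiso]
    rw [hωdef] at h1
    rw [← h1, WithLp.prod_norm_sq_eq_of_L2, WithLp.equiv_symm_apply, WithLp.toLp_fst, WithLp.toLp_snd]
  have key : ∀ (d : ℕ → 𝒟) (hfin : Set.Finite (Function.support d)) (hd : Memℓp d 2) (u : U),
      ‖M ((WithLp.equiv 2 ((lp (fun _ : ℕ => 𝒟) 2) × U)).symm (⟨d, hd⟩, u))‖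
        = ‖((WithLp.equiv 2 ((lp (fun _ : ℕ => 𝒟) 2) × U)).symm
            ((⟨d, hd⟩ : lp (fun _ : ℕ => 𝒟) 2), u))‖ := by
    intro d hfin hd u
    set dY : ℕ → Y := fun i => (WithLp.equiv 2 (Y × U) ((d i) : WithLp 2 (Y × U))).1 with hdY
    set dU : ℕ → U := fun i => (WithLp.equiv 2 (Y × U) ((d i) : WithLp 2 (Y × U))).2 with hdU
    set x : ℕ → U := fun n =>
      (A ^ n) u + ∑ i ∈ Finset.range n, (A ^ (n - 1 - i)) (dU i) with hxdef
    have hDd : ∀ i, Dω ((d i) : WithLp 2 (Y × U)) = (d i) := fun i => hDid _ (d i).2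
    have hx0 : x 0 = u := by simp [hxdef]
    have hxs : ∀ n, x (n + 1) = A (x n) + dU n := by
      intro n
      have h1 : A ((A ^ n) u) = (A ^ (n+1)) u := by
        rw [pow_succ', ContinuousLinearMap.mul_apply]
      have h2 : ∀ i ∈ Finset.range n, A ((A ^ (n - 1 - i)) (dU i)) = (A ^ (n - i)) (dU i) := by
        intro i hi
        rw [Finset.mem_range] at hi
        rw [← ContinuousLinearMap.mul_apply, ← pow_succ',
          show n - 1 - i + 1 = n - i by omega]
      simp only [hxdef, map_add, map_sum]
      rw [Finset.sum_range_succ, Finset.sum_congr rfl h2, h1]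
      simp only [show ∀ i, n + 1 - 1 - i = n - i from fun i => by omega]
      simp [add_assoc]
    have hg : ∀ n, (WithLp.equiv 2 ((lp (fun _ : ℕ => (Fᗮ : Submodule ℂ U)) 2) × (lp (fun _ : ℕ => Y) 2))
        (M ((WithLp.equiv 2 ((lp (fun _ : ℕ => 𝒟) 2) × U)).symm (⟨d, hd⟩, u)))).1 n
        = Submodule.orthogonalProjectionOnto Fᗮ (x n) := by
      intro n
      rw [hM1 d hfin hd u n]
      simp only [hDd]
      simp only [hxdef, hdU, map_add, map_sum, ContinuousLinearMap.comp_apply]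
    have hy : ∀ n, (WithLp.equiv 2 ((lp (fun _ : ℕ => (Fᗮ : Submodule ℂ U)) 2) × (lp (fun _ : ℕ => Y) 2))
        (M ((WithLp.equiv 2 ((lp (fun _ : ℕ => 𝒟) 2) × U)).symm (⟨d, hd⟩, u)))).2 n
        = ω₁ (Submodule.orthogonalProjectionOnto F (x n)) + dY n := by
      intro n
      rw [hM2 d hfin hd u n]
      simp only [hDd]
      simp only [hxdef, hdU, hdY, map_add, map_sum, ContinuousLinearMap.comp_apply]
      abel
    -- cross terms vanish
    have hcross : ∀ (f : F) (n : ℕ),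
        RCLike.re (inner ℂ (ω₁ f) (dY n) : ℂ) + RCLike.re (inner ℂ (ω₂ f) (dU n) : ℂ) = 0 := by
      intro f n
      have h0 : (inner ℂ (ω f) (((d n) : WithLp 2 (Y × U))) : ℂ) = 0 := by
        have h := ContinuousLinearMap.adjoint_inner_right ω f (((d n) : WithLp 2 (Y × U)))
        rw [← h, hωadjD _ (d n).2, inner_zero_right]
      have hsplit := WithLp.prod_inner_apply (𝕜 := ℂ) (ω f) (((d n) : WithLp 2 (Y × U)))
      rw [h0] at hsplit
      rw [hωdef] at hsplit
      have h1 : (WithLp.ofLp ((WithLp.equiv 2 (Y × U)).symm (ω₁ f, ω₂ f))).1 = ω₁ f :=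
        rfl
      have h2 : (WithLp.ofLp ((WithLp.equiv 2 (Y × U)).symm (ω₁ f, ω₂ f))).2 = ω₂ f :=
        rfl
      rw [h1, h2] at hsplit
      have := congrArg RCLike.re hsplit.symm
      simpa [hdY, hdU] using this
    have hdnorm : ∀ n, ‖((d n) : WithLp 2 (Y × U))‖^2 = ‖dY n‖^2 + ‖dU n‖^2 := by
      intro n
      rw [WithLp.prod_norm_sq_eq_of_L2]
      rfl
    -- one-step energy balance
    have hstep : ∀ n, ‖Submodule.orthogonalProjectionOnto Fᗮ (x n)‖^2
        + ‖ω₁ (Submodule.orthogonalProjectionOnto F (x n)) + dY n‖^2 + ‖x (n+1)‖^2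
        = ‖x n‖^2 + ‖((d n) : WithLp 2 (Y × U))‖^2 := by
      intro n
      set f : F := Submodule.orthogonalProjectionOnto F (x n) with hf
      have e1 := hpyth (x n)
      have e2 := hωsplit f
      have e3 : ‖ω₁ f + dY n‖^2
          = ‖ω₁ f‖^2 + 2 * RCLike.re (inner ℂ (ω₁ f) (dY n) : ℂ) + ‖dY n‖^2 :=
        norm_add_sq (𝕜 := ℂ) _ _
      have e4 : x (n+1) = ω₂ f + dU n := by
        rw [hxs n]; rfl
      have e5 : ‖x (n+1)‖^2
          = ‖ω₂ f‖^2 + 2 * RCLike.re (inner ℂ (ω₂ f) (dU n) : ℂ) + ‖dU n‖^2 := by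
        rw [e4]; exact norm_add_sq (𝕜 := ℂ) _ _
      have e6 := hcross f n
      have e7 := hdnorm n
      linarith
    -- telescoping
    have htel : ∀ N, (∑ n ∈ Finset.range N, (‖Submodule.orthogonalProjectionOnto Fᗮ (x n)‖^2
          + ‖ω₁ (Submodule.orthogonalProjectionOnto F (x n)) + dY n‖^2)) + ‖x N‖^2
        = ‖u‖^2 + ∑ n ∈ Finset.range N, ‖((d n) : WithLp 2 (Y × U))‖^2 := by
      intro N
      induction N with
      | zero => simp [hx0]
      | succ N ih =>
        rw [Finset.sum_range_succ, Finset.sum_range_succ]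
        have := hstep N
        linarith
    -- support bound
    obtain ⟨N₀, hN₀⟩ : ∃ N₀ : ℕ, ∀ n, N₀ ≤ n → d n = 0 := by
      rcases hfin.bddAbove with ⟨B, hB⟩
      refine ⟨B + 1, fun n hn => ?_⟩
      by_contra h
      have := hB (Function.mem_support.mpr h)
      omega
    have hdU0 : ∀ n, N₀ ≤ n → dU n = 0 := by
      intro n hn
      simp [hdU, hN₀ n hn]
    have htail : ∀ n, N₀ ≤ n → x n = (A ^ (n - N₀)) (x N₀) := by
      intro n hn
      induction n, hn using Nat.le_induction with
      | base => simp
      | succ n hn ih =>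
        rw [hxs n, hdU0 n hn, add_zero, ih, ← ContinuousLinearMap.mul_apply, ← pow_succ',
          show n - N₀ + 1 = n + 1 - N₀ by omega]
    have hxlim : Tendsto (fun n => ‖x n‖^2) atTop (𝓝 0) := by
      have h1 : Tendsto (fun n : ℕ => (A ^ (n - N₀)) (x N₀)) atTop (𝓝 0) :=
        (hstable (x N₀)).comp (tendsto_sub_atTop_nat N₀)
      have h2 : Tendsto (fun n => x n) atTop (𝓝 0) := by
        refine h1.congr' ?_
        filter_upwards [Filter.eventually_ge_atTop N₀] with n hn
        exact (htail n hn).symm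
      simpa using h2.norm.pow 2
    set C : ℝ := ∑ n ∈ Finset.range N₀, ‖((d n) : WithLp 2 (Y × U))‖^2 with hC
    have hdsum : ∀ N, N₀ ≤ N →
        ∑ n ∈ Finset.range N, ‖((d n) : WithLp 2 (Y × U))‖^2 = C := by
      intro N hN
      rw [hC]
      symm
      apply Finset.sum_subset (Finset.range_subset_range.mpr hN)
      intro i hi hni
      rw [Finset.mem_range] at hi
      rw [Finset.mem_range, not_lt] at hni
      simp [hN₀ i hni]
    have hSlim : Tendsto (fun N => ∑ n ∈ Finset.range N,
        (‖Submodule.orthogonalProjectionOnto Fᗮ (x n)‖^2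
          + ‖ω₁ (Submodule.orthogonalProjectionOnto F (x n)) + dY n‖^2)) atTop (𝓝 (‖u‖^2 + C)) := by
      have hdtend : Tendsto (fun N => ∑ n ∈ Finset.range N,
          ‖((d n) : WithLp 2 (Y × U))‖^2) atTop (𝓝 C) := by
        refine Tendsto.congr' ?_ tendsto_const_nhds
        filter_upwards [Filter.eventually_ge_atTop N₀] with N hN
        exact (hdsum N hN).symm
      have hconst : Tendsto (fun N => ‖u‖^2 + (∑ n ∈ Finset.range N,
          ‖((d n) : WithLp 2 (Y × U))‖^2) - ‖x N‖^2) atTop (𝓝 (‖u‖^2 + C - 0)) :=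
        (tendsto_const_nhds.add hdtend).sub hxlim
      rw [sub_zero] at hconst
      refine Tendsto.congr (fun N => ?_) hconst
      have := htel N
      linarith
    -- the lp norms
    set Mv := M ((WithLp.equiv 2 ((lp (fun _ : ℕ => 𝒟) 2) × U)).symm (⟨d, hd⟩, u)) with hMvdef
    set gc : lp (fun _ : ℕ => (Fᗮ : Submodule ℂ U)) 2 :=
      (WithLp.equiv 2 _ Mv).1 with hgc
    set yc : lp (fun _ : ℕ => Y) 2 := (WithLp.equiv 2 _ Mv).2 with hyc
    have hg2 := lp.hasSum_norm h2pos gc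
    have hy2 := lp.hasSum_norm h2pos yc
    simp_rw [hrpow] at hg2 hy2
    have hsum : HasSum (fun n => ‖gc n‖^2 + ‖yc n‖^2) (‖gc‖^2 + ‖yc‖^2) := hg2.add hy2
    have htends := hsum.tendsto_sum_nat
    have htends' : Tendsto (fun N => ∑ n ∈ Finset.range N,
        (‖Submodule.orthogonalProjectionOnto Fᗮ (x n)‖^2
          + ‖ω₁ (Submodule.orthogonalProjectionOnto F (x n)) + dY n‖^2)) atTop (𝓝 (‖gc‖^2 + ‖yc‖^2)) := by
      refine htends.congr (fun N => Finset.sum_congr rfl fun n _ => ?_)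
      rw [show gc n = Submodule.orthogonalProjectionOnto Fᗮ (x n) from hg n,
        show yc n = ω₁ (Submodule.orthogonalProjectionOnto F (x n)) + dY n from hy n]
    have huniq : ‖gc‖^2 + ‖yc‖^2 = ‖u‖^2 + C := tendsto_nhds_unique htends' hSlim
    have hMv2 : ‖Mv‖^2 = ‖gc‖^2 + ‖yc‖^2 := by
      rw [WithLp.prod_norm_sq_eq_of_L2]
      rfl
    have hd2 : ‖(⟨d, hd⟩ : lp (fun _ : ℕ => 𝒟) 2)‖^2 = C := by
      have h := lp.hasSum_norm h2pos (⟨d, hd⟩ : lp (fun _ : ℕ => 𝒟) 2)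
      simp_rw [hrpow] at h
      have h2 : HasSum (fun n => ‖(⟨d, hd⟩ : lp (fun _ : ℕ => 𝒟) 2) n‖^(2:ℕ)) C := by
        rw [hC]

        have : ∀ n ∉ Finset.range N₀, ‖(⟨d, hd⟩ : lp (fun _ : ℕ => 𝒟) 2) n‖^(2:ℕ) = 0 := by
          intro n hn
          rw [Finset.mem_range, not_lt] at hn
          have : (⟨d, hd⟩ : lp (fun _ : ℕ => 𝒟) 2) n = d n := rfl
          rw [this, hN₀ n hn]
          simp
        have h2' := hasSum_sum_of_ne_finset_zero (L := SummationFilter.unconditional ℕ) this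
        have h3 : (∑ n ∈ Finset.range N₀, ‖(⟨d, hd⟩ : lp (fun _ : ℕ => 𝒟) 2) n‖^(2:ℕ))
            = ∑ n ∈ Finset.range N₀, ‖((d n) : WithLp 2 (Y × U))‖^2 := by
          refine Finset.sum_congr rfl fun n _ => ?_
          rfl
        rw [h3] at h2'
        exact h2'
      exact h.unique h2
    have hv2 : ‖((WithLp.equiv 2 ((lp (fun _ : ℕ => 𝒟) 2) × U)).symm
        ((⟨d, hd⟩ : lp (fun _ : ℕ => 𝒟) 2), u))‖^2 = C + ‖u‖^2 := by
      rw [WithLp.prod_norm_sq_eq_of_L2, WithLp.equiv_symm_apply, WithLp.toLp_fst, WithLp.toLp_snd, hd2]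
    have hfinal : ‖Mv‖^2 = ‖((WithLp.equiv 2 ((lp (fun _ : ℕ => 𝒟) 2) × U)).symm
        ((⟨d, hd⟩ : lp (fun _ : ℕ => 𝒟) 2), u))‖^2 := by
      rw [hMv2, huniq, hv2]; ring
    have hnn1 : (0:ℝ) ≤ ‖Mv‖ := norm_nonneg _
    have hnn2 : (0:ℝ) ≤ ‖((WithLp.equiv 2 ((lp (fun _ : ℕ => 𝒟) 2) × U)).symm
        ((⟨d, hd⟩ : lp (fun _ : ℕ => 𝒟) 2), u))‖ := norm_nonneg _
    nlinarith [hfinal, hnn1, hnn2]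
  -- ## Part C: extend to the whole space by density, conclude
  have hiso : ∀ w, ‖M w‖ = ‖w‖ := by
    intro w
    set c : lp (fun _ : ℕ => 𝒟) 2 :=
      (WithLp.equiv 2 ((lp (fun _ : ℕ => 𝒟) 2) × U) w).1 with hc
    set u : U := (WithLp.equiv 2 ((lp (fun _ : ℕ => 𝒟) 2) × U) w).2 with hu
    have hw : w = (WithLp.equiv 2 ((lp (fun _ : ℕ => 𝒟) 2) × U)).symm (c, u) := by
      rw [hc, hu]
      exact (Equiv.symm_apply_apply _ w).symm
    have hzero : ∀ s : Finset ℕ,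
        ‖M ((WithLp.equiv 2 ((lp (fun _ : ℕ => 𝒟) 2) × U)).symm
            (∑ i ∈ s, lp.single 2 i (c i), u))‖
          = ‖(WithLp.equiv 2 ((lp (fun _ : ℕ => 𝒟) 2) × U)).symm
            (∑ i ∈ s, lp.single 2 i (c i), u)‖ := by
      intro s
      set c' : lp (fun _ : ℕ => 𝒟) 2 := ∑ i ∈ s, lp.single 2 i (c i) with hc'
      have hsupp : (Function.support (⇑c' : ℕ → 𝒟)).Finite := by
        apply Set.Finite.subset s.finite_toSet
        intro j hj
        by_contra hjs
        apply hj
        show c' j = 0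
        rw [hc', lp.coeFn_sum]
        simp only [Finset.sum_apply]
        refine Finset.sum_eq_zero fun i hi => ?_
        exact lp.single_apply_ne 2 i _ (fun h => hjs (h ▸ hi))
      have heq : (⟨⇑c', lp.memℓp c'⟩ : lp (fun _ : ℕ => 𝒟) 2) = c' := rfl
      have hk := key (⇑c') hsupp (lp.memℓp c') u
      rw [heq] at hk
      exact hk
    have hlim := lp.hasSum_single (p := 2) (by norm_num : (2:ℝ≥0∞) ≠ ⊤) c
    have hpair : Tendsto (fun s : Finset ℕ =>
        (WithLp.equiv 2 ((lp (fun _ : ℕ => 𝒟) 2) × U)).symm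
          (∑ i ∈ s, lp.single 2 i (c i), u))
        atTop (𝓝 ((WithLp.equiv 2 ((lp (fun _ : ℕ => 𝒟) 2) × U)).symm (c, u))) := by
      exact ((WithLp.prod_continuous_toLp 2 (lp (fun _ : ℕ => 𝒟) 2) U).tendsto
        _).comp (hlim.prodMk_nhds tendsto_const_nhds)
    have hTa : Tendsto (fun s : Finset ℕ =>
        ‖M ((WithLp.equiv 2 ((lp (fun _ : ℕ => 𝒟) 2) × U)).symm
          (∑ i ∈ s, lp.single 2 i (c i), u))‖) atTop
        (𝓝 ‖M ((WithLp.equiv 2 ((lp (fun _ : ℕ => 𝒟) 2) × U)).symm (c, u))‖) :=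
      (((M.continuous.tendsto _).comp hpair)).norm
    have hTb : Tendsto (fun s : Finset ℕ =>
        ‖M ((WithLp.equiv 2 ((lp (fun _ : ℕ => 𝒟) 2) × U)).symm
          (∑ i ∈ s, lp.single 2 i (c i), u))‖) atTop
        (𝓝 ‖(WithLp.equiv 2 ((lp (fun _ : ℕ => 𝒟) 2) × U)).symm (c, u)‖) := by
      refine Tendsto.congr (fun s => (hzero s).symm) hpair.norm
    have := tendsto_nhds_unique hTa hTb
    rw [hw]
    exact this
  have hMinner : ∀ x y, (inner ℂ (M x) (M y) : ℂ) = inner ℂ x y := fun x y =>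
    LinearIsometry.inner_map_map ⟨M.toLinearMap, hiso⟩ x y
  refine ⟨?_, hMcoiso⟩
  refine ContinuousLinearMap.ext fun v => ?_
  refine ext_inner_left ℂ fun w => ?_
  rw [ContinuousLinearMap.comp_apply, ContinuousLinearMap.adjoint_inner_right, hMinner,
    ContinuousLinearMap.one_apply]
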